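/- arXiv:1306.0860 — 4 statements merged into one kernel-verified Lean document; each statement's English description precedes it below -/
import Mathlib

section
/- In the C*-algebra C_b(ℝ, ℂ) of bounded continuous complex-valued functions on ℝ, the smallest closed star-subalgebra containing all the functions x ↦ (i − s·x)⁻¹ for s ∈ ℝ equals the set {g + c·1 : g ∈ C₀(ℝ, ℂ), c ∈ ℂ}, where C₀(ℝ, ℂ) denotes the continuous functions vanishing at infinity and 1 is the constant function with value 1. -/
open BoundedContinuousFunction

noncomputable section SWResolventAux
open Complex Filter Topology

set_option synthInstance.maxHeartbeats 1000000
set_option maxHeartbeats 4000000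

/-- The circle `|z|² + Im z = 0`, the closure of the range of `x ↦ (i - x)⁻¹`. -/
def resK : Set ℂ := {z : ℂ | Complex.normSq z + z.im = 0}

lemma resK_zero_mem : (0 : ℂ) ∈ resK := by simp [resK]

lemma resK_isCompact : IsCompact resK := by
  have hclosed : IsClosed resK := by
    have : resK = (fun z : ℂ => Complex.normSq z + z.im) ⁻¹' {0} := rfl
    rw [this]
    exact isClosed_singleton.preimage (by continuity)
  refine Metric.isCompact_of_isClosed_isBounded hclosed ?_
  refine (Metric.isBounded_iff_subset_closedBall 0).2 ⟨1, fun z hz => ?_⟩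
  have hz' : Complex.normSq z = -z.im := by
    have := hz; simp only [resK, Set.mem_setOf_eq] at this; linarith
  have h1 : Complex.normSq z ≤ |z.im| := by
    rw [hz']; exact neg_le_abs _
  have h2 : |z.im| ≤ ‖z‖ := Complex.abs_im_le_norm z
  have h3 : ‖z‖ ^ 2 ≤ ‖z‖ := by
    rw [← Complex.sq_norm] at h1; exact h1.trans h2
  simp only [Metric.mem_closedBall, Complex.dist_eq, sub_zero]
  nlinarith [norm_nonneg z]

lemma sub_real_ne_zero (x : ℝ) : Complex.I - (x : ℂ) ≠ 0 := by
  intro h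
  have := congrArg Complex.im h
  simp at this

lemma phi_mem_resK (x : ℝ) : (Complex.I - (x : ℂ))⁻¹ ∈ resK := by
  have hx := sub_real_ne_zero x
  simp only [resK, Set.mem_setOf_eq]
  rw [Complex.normSq_inv, Complex.inv_im]
  have him : (Complex.I - (x : ℂ)).im = 1 := by simp
  rw [him]
  have hns : Complex.normSq (Complex.I - (x : ℂ)) ≠ 0 := (Complex.normSq_pos.2 hx).ne'
  field_simp; ring

instance : Zero resK := ⟨⟨0, resK_zero_mem⟩⟩
lemma resK_coe_zero : ((0 : resK) : ℂ) = 0 := rfl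
instance : Fact ((0 : ℂ) ∈ resK) := ⟨resK_zero_mem⟩
instance : CompactSpace resK := isCompact_iff_compactSpace.mp resK_isCompact

lemma resK_inv_im {z : ℂ} (hz : z ∈ resK) (hz0 : z ≠ 0) : z⁻¹.im = 1 := by
  rw [Complex.inv_im]
  have h : Complex.normSq z = -z.im := by
    have := hz; simp only [resK, Set.mem_setOf_eq] at this; linarith
  have hns : Complex.normSq z ≠ 0 := (Complex.normSq_pos.2 hz0).ne'
  rw [h] at hns ⊢
  field_simp
  exact div_self (fun h0 => hns (by simp [h0]))

lemma resolvent_zero_at_infty {s : ℝ} (hs : s ≠ 0) :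
    Tendsto (fun x : ℝ => (Complex.I - (s : ℂ) * (x : ℂ))⁻¹) (cocompact ℝ) (𝓝 0) := by
  have h1 : Tendsto (fun x : ℝ => Complex.I - (s : ℂ) * (x : ℂ)) (cocompact ℝ)
      (Bornology.cobounded ℂ) := by
    rw [← tendsto_norm_atTop_iff_cobounded]
    have hb : Tendsto (fun x : ℝ => |s| * |x| - 1) (cocompact ℝ) atTop := by
      have := tendsto_norm_cocompact_atTop (E := ℝ)
      exact tendsto_atTop_add_const_right _ _
        (this.const_mul_atTop (abs_pos.2 hs))
    refine tendsto_atTop_mono ?_ hb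
    intro x
    have : ‖(s : ℂ) * (x : ℂ)‖ - ‖(Complex.I : ℂ)‖ ≤ ‖Complex.I - (s : ℂ) * (x : ℂ)‖ := by
      rw [norm_sub_rev]
      exact norm_sub_norm_le _ _
    simpa [Complex.norm_real, abs_mul] using this
  exact tendsto_inv₀_cobounded.comp h1

lemma norm_const_le_norm_add (g : ZeroAtInftyContinuousMap ℝ ℂ) (c : ℂ) :
    ‖c‖ ≤ ‖g.toBCF + c • (1 : BoundedContinuousFunction ℝ ℂ)‖ := by
  by_contra h
  push_neg at h
  set M := ‖g.toBCF + c • (1 : BoundedContinuousFunction ℝ ℂ)‖ with hM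
  have hε : 0 < ‖c‖ - M := by linarith
  have hev : ∀ᶠ x in cocompact ℝ, ‖g x‖ < ‖c‖ - M := by
    have := Metric.tendsto_nhds.mp g.zero_at_infty' _ hε
    simpa [dist_eq_norm] using this
  obtain ⟨x, hx⟩ := hev.exists
  have hval : ‖g x + c‖ ≤ M := by
    have := BoundedContinuousFunction.norm_coe_le_norm
      (g.toBCF + c • (1 : BoundedContinuousFunction ℝ ℂ)) x
    simpa using this
  have : ‖c‖ ≤ ‖g x + c‖ + ‖g x‖ := by
    have := norm_add_le (g x + c) (-(g x))
    simpa using this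
  linarith

/-- `C₀(ℝ,ℂ) + ℂ·1` as a non-unital star subalgebra of `C_b(ℝ,ℂ)`. -/
def resB : NonUnitalStarSubalgebra ℂ (BoundedContinuousFunction ℝ ℂ) where
  carrier := {f : BoundedContinuousFunction ℝ ℂ |
    ∃ (g : ZeroAtInftyContinuousMap ℝ ℂ) (c : ℂ),
      f = g.toBCF + c • (1 : BoundedContinuousFunction ℝ ℂ)}
  add_mem' := by
    rintro f₁ f₂ ⟨g₁, c₁, rfl⟩ ⟨g₂, c₂, rfl⟩
    exact ⟨g₁ + g₂, c₁ + c₂, by ext x; simp; ring⟩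
  zero_mem' := ⟨0, 0, by ext x; simp⟩
  mul_mem' := by
    rintro f₁ f₂ ⟨g₁, c₁, rfl⟩ ⟨g₂, c₂, rfl⟩
    exact ⟨g₁ * g₂ + c₁ • g₂ + c₂ • g₁, c₁ * c₂, by ext x; simp; ring⟩
  smul_mem' := by
    rintro r f ⟨g, c, rfl⟩
    exact ⟨r • g, r * c, by ext x; simp⟩
  star_mem' := by
    rintro f ⟨g, c, rfl⟩
    exact ⟨star g, star c, by ext x; simp⟩

lemma sub_decomp (g₁ g₂ : ZeroAtInftyContinuousMap ℝ ℂ) (c₁ c₂ : ℂ) :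
    (g₁.toBCF + c₁ • (1 : BoundedContinuousFunction ℝ ℂ))
      - (g₂.toBCF + c₂ • (1 : BoundedContinuousFunction ℝ ℂ))
      = (g₁ - g₂).toBCF + (c₁ - c₂) • (1 : BoundedContinuousFunction ℝ ℂ) := by
  ext x; simp; ring

lemma resB_isClosed : IsClosed (resB : Set (BoundedContinuousFunction ℝ ℂ)) := by
  rw [← isSeqClosed_iff_isClosed]
  intro u f hu huf
  choose g c hgc using hu
  have key : ∀ m n, ‖c m - c n‖ ≤ ‖u m - u n‖ := by
    intro m n
    calc ‖c m - c n‖ ≤ ‖(g m - g n).toBCF + (c m - c n) •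
        (1 : BoundedContinuousFunction ℝ ℂ)‖ := norm_const_le_norm_add _ _
      _ = ‖u m - u n‖ := by rw [← sub_decomp, ← hgc m, ← hgc n]
  have hcauchy : CauchySeq c := by
    have h0 : CauchySeq u := huf.cauchySeq
    rw [Metric.cauchySeq_iff] at h0 ⊢
    intro ε hε
    obtain ⟨N, hN⟩ := h0 ε hε
    refine ⟨N, fun m hm n hn => ?_⟩
    have h2 := hN m hm n hn
    rw [dist_eq_norm] at h2 ⊢
    exact lt_of_le_of_lt (key m n) h2
  obtain ⟨c₀, hc₀⟩ := cauchySeq_tendsto_of_complete hcauchy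
  have hgt : Tendsto (fun n => (g n).toBCF) atTop (𝓝 (f - c₀ • 1)) := by
    have h1 : Tendsto (fun n => u n - c n • (1 : BoundedContinuousFunction ℝ ℂ))
        atTop (𝓝 (f - c₀ • 1)) := huf.sub (hc₀.smul_const _)
    refine h1.congr fun n => ?_
    rw [hgc n]; abel
  have hmem : f - c₀ • 1 ∈ Set.range
      (ZeroAtInftyContinuousMap.toBCF : ZeroAtInftyContinuousMap ℝ ℂ → _) :=
    ZeroAtInftyContinuousMap.isClosed_range_toBCF.mem_of_tendsto hgt
      (Eventually.of_forall fun n => ⟨g n, rfl⟩)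
  obtain ⟨g₀, hg₀⟩ := hmem
  exact ⟨g₀, c₀, by rw [hg₀]; abel⟩

/-- The map `ℝ → resK`, `x ↦ (i - x)⁻¹`. -/
def resPhi : C(ℝ, resK) :=
  ⟨fun x => ⟨(Complex.I - (x : ℂ))⁻¹, phi_mem_resK x⟩, by
    apply Continuous.subtype_mk
    exact Continuous.inv₀ (by continuity) fun x => sub_real_ne_zero x⟩

open scoped ContinuousMapZero

/-- Substitution of the function `x ↦ (i-x)⁻¹` into a continuous function on `resK`. -/
def resT (h : C(resK, ℂ)₀) : BoundedContinuousFunction ℝ ℂ :=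
  (mkOfCompact (h : C(resK, ℂ))).compContinuous resPhi

lemma resT_apply (h : C(resK, ℂ)₀) (x : ℝ) :
    resT h x = h ⟨(Complex.I - (x : ℂ))⁻¹, phi_mem_resK x⟩ := rfl

lemma resT_continuous : Continuous resT := by
  refine (BoundedContinuousFunction.continuous_compContinuous resPhi).comp ?_
  have h2 : Continuous (mkOfCompact : C(resK, ℂ) → (resK →ᵇ ℂ)) :=
    LipschitzWith.continuous (K := 1) (LipschitzWith.of_dist_le_mul fun f g => by
      rw [BoundedContinuousFunction.dist_mkOfCompact]; simp)
  exact h2.comp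
    ContinuousMapZero.isUniformEmbedding_toContinuousMap.toIsUniformInducing.isInducing.continuous

lemma resT_add (h₁ h₂ : C(resK, ℂ)₀) : resT (h₁ + h₂) = resT h₁ + resT h₂ := by
  ext x; simp [resT_apply]
lemma resT_mul (h₁ h₂ : C(resK, ℂ)₀) : resT (h₁ * h₂) = resT h₁ * resT h₂ := by
  ext x; simp [resT_apply]
lemma resT_smul (r : ℂ) (h : C(resK, ℂ)₀) : resT (r • h) = r • resT h := by
  ext x; simp [resT_apply]
lemma resT_star (h : C(resK, ℂ)₀) : resT (star h) = star (resT h) := by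
  ext x; simp [resT_apply]
lemma resT_zero : resT 0 = 0 := by
  ext x; simp [resT_apply]

/-- The element of `C(resK, ℂ)₀` corresponding to `g ∈ C₀(ℝ, ℂ)`. -/
def resH (g : ZeroAtInftyContinuousMap ℝ ℂ) : C(resK, ℂ)₀ := by
  refine ⟨⟨fun z => if (z : ℂ) = 0 then 0 else g (-((z : ℂ)⁻¹.re)), ?_⟩, by simp [resK_coe_zero]⟩
  rw [continuous_iff_continuousAt]
  intro z
  by_cases hz : (z : ℂ) = 0
  · have hval : (if (z : ℂ) = 0 then (0:ℂ) else g (-((z : ℂ)⁻¹.re))) = 0 := by rw [if_pos hz]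
    rw [ContinuousAt, hval]
    rw [Metric.tendsto_nhds]
    intro ε hε
    have hev : ∀ᶠ x in cocompact ℝ, ‖g x‖ < ε := by
      have := Metric.tendsto_nhds.mp g.zero_at_infty' _ hε
      simpa [dist_eq_norm] using this
    obtain ⟨s, hs_comp, hs_sub⟩ := mem_cocompact.mp hev
    obtain ⟨r, hr⟩ := hs_comp.isBounded.subset_closedBall 0
    have hδ : (0:ℝ) < (max r 0 + 2)⁻¹ := by positivity
    have hball : ∀ᶠ w : resK in 𝓝 z, dist w z < (max r 0 + 2)⁻¹ :=
      Metric.ball_mem_nhds z hδ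
    filter_upwards [hball] with w hw
    by_cases hw0 : (w : ℂ) = 0
    · simp [hw0, hε]
    · rw [if_neg hw0]
      simp only [dist_zero_right]
      have hwz : ‖(w : ℂ)‖ < (max r 0 + 2)⁻¹ := by
        have : dist (w : ℂ) (z : ℂ) = dist w z := rfl
        rw [← this] at hw
        simpa [Complex.dist_eq, hz] using hw
      have habs : ‖(w : ℂ)⁻¹‖ > max r 0 + 1 := by
        rw [norm_inv]
        have hwpos : 0 < ‖(w : ℂ)‖ := by
          simpa [norm_pos_iff] using hw0
        have h4 : (max r 0 + 2) < (‖(w : ℂ)‖)⁻¹ := by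
          have := inv_strictAnti₀ hwpos hwz
          rwa [inv_inv] at this
        linarith
      have hre : |(w : ℂ)⁻¹.re| > max r 0 := by
        have him : ((w : ℂ)⁻¹).im = 1 := resK_inv_im w.2 hw0
        have := Complex.norm_le_abs_re_add_abs_im ((w : ℂ)⁻¹)
        rw [him] at this
        simp only [abs_one] at this
        linarith
      have hx : -((w : ℂ)⁻¹.re) ∉ s := by
        intro hmem
        have := hr hmem
        simp only [Metric.mem_closedBall, Real.dist_eq, sub_zero] at this
        rw [abs_neg] at this
        have : |(w : ℂ)⁻¹.re| ≤ max r 0 := le_trans this (le_max_left r 0)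
        linarith
      exact hs_sub hx
  · have hopen : IsOpen {w : resK | (w : ℂ) ≠ 0} :=
      (isOpen_compl_singleton.preimage continuous_subtype_val)
    have hev : ∀ᶠ w : resK in 𝓝 z, g (-((w : ℂ)⁻¹.re)) = (fun w : resK =>
        if (w : ℂ) = 0 then (0:ℂ) else g (-((w : ℂ)⁻¹.re))) w := by
      filter_upwards [hopen.mem_nhds hz] with w hw
      rw [if_neg hw]
    refine ContinuousAt.congr ?_ hev
    have : ContinuousAt (fun w : resK => -((w : ℂ)⁻¹.re)) z := by
      refine ContinuousAt.neg ?_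
      refine (Complex.continuous_re.continuousAt).comp ?_
      exact (continuousAt_inv₀ hz).comp continuous_subtype_val.continuousAt
    exact (g.continuous.continuousAt).comp this

lemma resT_resH (g : ZeroAtInftyContinuousMap ℝ ℂ) : resT (resH g) = g.toBCF := by
  ext x
  rw [resT_apply]
  have hne : (Complex.I - (x : ℂ))⁻¹ ≠ 0 := inv_ne_zero (sub_real_ne_zero x)
  show (if ((Complex.I - (x : ℂ))⁻¹ : ℂ) = 0 then (0:ℂ)
      else g (-(((Complex.I - (x : ℂ))⁻¹ : ℂ)⁻¹.re))) = g x
  rw [if_neg hne, inv_inv]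
  congr 1
  simp

end SWResolventAux

open scoped ContinuousMapZero in
open Complex Filter Topology in
/-- In the C*-algebra `C_b(ℝ, ℂ)` of bounded continuous complex functions on `ℝ`, the smallest
closed star-subalgebra containing all the functions `x ↦ (i − s·x)⁻¹`, `s ∈ ℝ`, equals the set
of functions `g + c·1` with `g ∈ C₀(ℝ, ℂ)` and `c ∈ ℂ`. -/
theorem closure_adjoin_resolvent_functions_eq_zeroAtInfty_plus_const :
    closure ((NonUnitalStarAlgebra.adjoin ℂ
        {f : BoundedContinuousFunction ℝ ℂ |
          ∃ s : ℝ, ∀ x : ℝ, f x = (Complex.I - (s : ℂ) * (x : ℂ))⁻¹} :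
        NonUnitalStarSubalgebra ℂ (BoundedContinuousFunction ℝ ℂ)) :
          Set (BoundedContinuousFunction ℝ ℂ))
      = {f : BoundedContinuousFunction ℝ ℂ |
          ∃ (g : ZeroAtInftyContinuousMap ℝ ℂ) (c : ℂ),
            f = g.toBCF + c • (1 : BoundedContinuousFunction ℝ ℂ)} := by
  set S : Set (BoundedContinuousFunction ℝ ℂ) :=
    {f : BoundedContinuousFunction ℝ ℂ |
      ∃ s : ℝ, ∀ x : ℝ, f x = (Complex.I - (s : ℂ) * (x : ℂ))⁻¹} with hS
  set A := NonUnitalStarAlgebra.adjoin ℂ S with hA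
  have hAcl : ((A.topologicalClosure : NonUnitalStarSubalgebra ℂ _) : Set _)
      = closure (A : Set (BoundedContinuousFunction ℝ ℂ)) := rfl
  apply subset_antisymm
  · -- closure A ⊆ resB
    have hSB : S ⊆ (resB : Set (BoundedContinuousFunction ℝ ℂ)) := by
      rintro f ⟨s, hf⟩
      by_cases hs : s = 0
      · refine ⟨0, -Complex.I, ?_⟩
        ext x
        have := hf x
        rw [hs] at this
        simpa [Complex.inv_I] using this
      · refine ⟨⟨⟨f, f.continuous⟩, ?_⟩, 0, ?_⟩
        · exact (resolvent_zero_at_infty hs).congr (fun x => (hf x).symm)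
        · ext x
          simp only [BoundedContinuousFunction.add_apply, BoundedContinuousFunction.smul_apply,
            BoundedContinuousFunction.coe_one, Pi.one_apply, zero_smul, add_zero]
          rfl
    have hAB : A ≤ resB := NonUnitalStarAlgebra.adjoin_le hSB
    exact closure_minimal hAB resB_isClosed
  · -- resB ⊆ closure A
    -- first: constants
    have h1A : (1 : BoundedContinuousFunction ℝ ℂ) ∈ A := by
      have hmem : (-Complex.I) • (1 : BoundedContinuousFunction ℝ ℂ) ∈ S := by
        refine ⟨0, fun x => ?_⟩
        simp [Complex.inv_I]
      have hmem' : (-Complex.I) • (1 : BoundedContinuousFunction ℝ ℂ) ∈ A :=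
        NonUnitalStarAlgebra.subset_adjoin ℂ S hmem
      have : Complex.I • ((-Complex.I) • (1 : BoundedContinuousFunction ℝ ℂ)) ∈ A :=
        SMulMemClass.smul_mem _ hmem'
      simpa [smul_smul, Complex.I_mul_I] using this
    -- second: C₀ functions are in the closure
    have hC0 : ∀ g : ZeroAtInftyContinuousMap ℝ ℂ,
        g.toBCF ∈ closure (A : Set (BoundedContinuousFunction ℝ ℂ)) := by
      intro g
      have hid : resT (ContinuousMapZero.id resK) ∈ A := by
        refine NonUnitalStarAlgebra.subset_adjoin ℂ S ⟨1, fun x => ?_⟩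
        rw [resT_apply]
        simp [ContinuousMapZero.id]
        rfl
      have hsub : ((NonUnitalStarAlgebra.adjoin ℂ
          {(ContinuousMapZero.id resK : C(resK, ℂ)₀)}) : Set C(resK, ℂ)₀)
            ⊆ resT ⁻¹' (closure (A : Set (BoundedContinuousFunction ℝ ℂ))) := by
        intro h hh
        rw [SetLike.mem_coe] at hh
        induction hh using NonUnitalStarAlgebra.adjoin_induction with
        | mem f hf =>
          obtain rfl := Set.mem_singleton_iff.mp hf
          exact subset_closure hid
        | add f₁ f₂ _ _ hf₁ hf₂ =>
          simp only [Set.mem_preimage, resT_add] at *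
          rw [← hAcl] at hf₁ hf₂ ⊢
          exact add_mem hf₁ hf₂
        | zero =>
          simp only [Set.mem_preimage, resT_zero]
          exact subset_closure (zero_mem A)
        | mul f₁ f₂ _ _ hf₁ hf₂ =>
          simp only [Set.mem_preimage, resT_mul] at *
          rw [← hAcl] at hf₁ hf₂ ⊢
          exact mul_mem hf₁ hf₂
        | smul r f _ hf =>
          simp only [Set.mem_preimage, resT_smul] at *
          rw [← hAcl] at hf ⊢
          exact SMulMemClass.smul_mem r hf
        | star f _ hf =>
          simp only [Set.mem_preimage, resT_star] at *
          rw [← hAcl] at hf ⊢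
          exact star_mem hf
      have hclosed : IsClosed (resT ⁻¹' (closure (A : Set (BoundedContinuousFunction ℝ ℂ)))) :=
        isClosed_closure.preimage resT_continuous
      have hdense := ContinuousMapZero.adjoin_id_dense resK
      have hall : (Set.univ : Set C(resK, ℂ)₀)
          ⊆ resT ⁻¹' (closure (A : Set (BoundedContinuousFunction ℝ ℂ))) := by
        rw [← hdense.closure_eq]
        exact closure_minimal hsub hclosed
      have := hall (Set.mem_univ (resH g))
      rwa [Set.mem_preimage, resT_resH] at this
    rintro f ⟨g, c, rfl⟩
    have hgc : g.toBCF ∈ closure (A : Set (BoundedContinuousFunction ℝ ℂ)) := hC0 g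
    have hc1 : c • (1 : BoundedContinuousFunction ℝ ℂ) ∈
        closure (A : Set (BoundedContinuousFunction ℝ ℂ)) :=
      subset_closure (SMulMemClass.smul_mem c h1A)
    rw [← hAcl] at hgc hc1 ⊢
    exact add_mem hgc hc1
end

section
/- Let A be a unital complex C*-algebra, let b ∈ A be self-adjoint, and let B ⊆ A be a closed star-subalgebra (not necessarily containing the unit). If R(μ₀, b) ∈ B for some μ₀ ∈ ℝ \ {0}, then R(μ, b) ∈ B for every μ ∈ ℝ \ {0}. -/
/-- The resolvent `R(λ, a) = (iλ·1 − a)⁻¹` of an element `a` of a unital algebra,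
defined via `Ring.inverse`. -/
noncomputable def rsl {A : Type*} [CStarAlgebra A] (l : ℝ) (a : A) : A :=
  Ring.inverse (((l : ℂ) * Complex.I) • (1 : A) - a)

namespace RslAux
variable {A : Type*} [CStarAlgebra A]

lemma isUnit_aux {b : A} (hb : IsSelfAdjoint b) {μ : ℝ} (hμ : μ ≠ 0) :
    IsUnit (((μ : ℂ) * Complex.I) • (1 : A) - b) := by
  have hns : (μ : ℂ) * Complex.I ∉ spectrum ℂ b := by
    intro h
    have h2 := hb.mem_spectrum_eq_re h
    have him := congrArg Complex.im h2
    simp [Complex.mul_im] at him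
    exact hμ him
  rw [spectrum.notMem_iff] at hns
  simpa [Algebra.algebraMap_eq_smul_one] using hns

lemma rsl_eq_cfc {b : A} (hb : IsSelfAdjoint b) {μ : ℝ} (hμ : μ ≠ 0) :
    rsl μ b = cfc (fun z : ℂ => ((μ : ℂ) * Complex.I - z)⁻¹) b := by
  have := hb.isStarNormal
  have hsp : ∀ z ∈ spectrum ℂ b, (μ : ℂ) * Complex.I - z ≠ 0 := by
    intro z hz h0
    have h2 := hb.mem_spectrum_eq_re hz
    have : z = (μ : ℂ) * Complex.I := by linear_combination -h0
    rw [this] at h2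
    have him := congrArg Complex.im h2
    simp [Complex.mul_im] at him
    exact hμ him
  have hg : ContinuousOn (fun z : ℂ => (μ : ℂ) * Complex.I - z) (spectrum ℂ b) :=
    (continuous_const.sub continuous_id).continuousOn
  have hf : ContinuousOn (fun z : ℂ => ((μ : ℂ) * Complex.I - z)⁻¹) (spectrum ℂ b) :=
    hg.inv₀ hsp
  have hgb : cfc (fun z : ℂ => (μ : ℂ) * Complex.I - z) b = ((μ : ℂ) * Complex.I) • (1 : A) - b := by
    rw [cfc_sub _ _ b (by fun_prop) (by fun_prop)]
    rw [cfc_const _ b, cfc_id' ℂ b, Algebra.algebraMap_eq_smul_one]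
  have h1 : (((μ : ℂ) * Complex.I) • (1 : A) - b) * cfc (fun z : ℂ => ((μ : ℂ) * Complex.I - z)⁻¹) b = 1 := by
    rw [← hgb, ← cfc_mul _ _ b hg hf]
    calc cfc (fun z : ℂ => ((μ : ℂ) * Complex.I - z) * ((μ : ℂ) * Complex.I - z)⁻¹) b
        = cfc (fun _ : ℂ => (1 : ℂ)) b := by
          apply cfc_congr
          intro z hz
          exact mul_inv_cancel₀ (hsp z hz)
      _ = 1 := by rw [cfc_const _ b, map_one]
  have h2 : cfc (fun z : ℂ => ((μ : ℂ) * Complex.I - z)⁻¹) b * (((μ : ℂ) * Complex.I) • (1 : A) - b) = 1 := by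
    rw [← hgb, ← cfc_mul _ _ b hf hg]
    calc cfc (fun z : ℂ => ((μ : ℂ) * Complex.I - z)⁻¹ * ((μ : ℂ) * Complex.I - z)) b
        = cfc (fun _ : ℂ => (1 : ℂ)) b := by
          apply cfc_congr
          intro z hz
          exact inv_mul_cancel₀ (hsp z hz)
      _ = 1 := by rw [cfc_const _ b, map_one]
  let U : Aˣ := ⟨_, _, h1, h2⟩
  show Ring.inverse (U : A) = _
  rw [Ring.inverse_unit]
  rfl

lemma norm_rsl_le {b : A} (hb : IsSelfAdjoint b) {μ : ℝ} (hμ : μ ≠ 0) :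
    ‖rsl μ b‖ ≤ |μ|⁻¹ := by
  have := hb.isStarNormal
  rw [rsl_eq_cfc hb hμ]
  apply norm_cfc_le (by positivity)
  intro z hz
  have h2 := hb.mem_spectrum_eq_re hz
  rw [norm_inv]
  have hne : (μ : ℂ) * Complex.I - z ≠ 0 := by
    intro h0
    have : z = (μ : ℂ) * Complex.I := by linear_combination -h0
    rw [this] at h2
    have him := congrArg Complex.im h2
    simp [Complex.mul_im] at him
    exact hμ him
  rw [inv_le_inv₀ (norm_pos_iff.mpr hne) (by positivity)]
  have : |μ| = |((μ : ℂ) * Complex.I - z).im| := by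
    rw [h2]; simp [Complex.mul_im]
  rw [this]
  exact Complex.abs_im_le_norm _

end RslAux

namespace RslAux
variable {A : Type*} [CStarAlgebra A]

lemma step {b : A} (hb : IsSelfAdjoint b) (B : NonUnitalStarSubalgebra ℂ A)
    (hB : IsClosed (B : Set A)) {μ ν : ℝ} (hμ : μ ≠ 0) (hν : ν ≠ 0)
    (hd : |μ - ν| < |μ|) (hmem : rsl μ b ∈ B) : rsl ν b ∈ B := by
  set u : A := ((μ : ℂ) * Complex.I) • (1 : A) - b with hu
  set v : A := ((ν : ℂ) * Complex.I) • (1 : A) - b with hv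
  have hUu : IsUnit u := isUnit_aux hb hμ
  have hUv : IsUnit v := isUnit_aux hb hν
  set R : A := rsl μ b with hR
  set S : A := rsl ν b with hS
  have hRu : R * u = 1 := Ring.inverse_mul_cancel u hUu
  have hvS : v * S = 1 := Ring.mul_inverse_cancel v hUv
  set c : ℂ := ((μ : ℂ) - ν) * Complex.I with hc
  have huv : u = v + c • (1 : A) := by
    rw [hu, hv, hc, sub_mul]
    module
  have key : S = R + c • (R * S) := by
    have h1 : u * S = 1 + c • S := by
      rw [huv, add_mul, hvS, smul_mul_assoc, one_mul]
    calc S = (R * u) * S := by rw [hRu, one_mul]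
      _ = R * (u * S) := by rw [mul_assoc]
      _ = R * (1 + c • S) := by rw [h1]
      _ = R + c • (R * S) := by rw [mul_add, mul_one, mul_smul_comm]
  have key_n : ∀ n : ℕ,
      S = (∑ k ∈ Finset.range (n + 1), c ^ k • R ^ (k + 1)) + c ^ (n + 1) • (R ^ (n + 1) * S) := by
    intro n
    induction n with
    | zero => simpa using key
    | succ n ih =>
      calc S = (∑ k ∈ Finset.range (n + 1), c ^ k • R ^ (k + 1))
            + c ^ (n + 1) • (R ^ (n + 1) * S) := ih
        _ = (∑ k ∈ Finset.range (n + 1), c ^ k • R ^ (k + 1))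
            + c ^ (n + 1) • (R ^ (n + 1) * (R + c • (R * S))) := by rw [← key]
        _ = (∑ k ∈ Finset.range (n + 1 + 1), c ^ k • R ^ (k + 1))
            + c ^ (n + 1 + 1) • (R ^ (n + 1 + 1) * S) := by
          conv_rhs => rw [Finset.sum_range_succ]
          rw [add_assoc]
          congr 1
          rw [mul_add, smul_add, ← pow_succ, mul_smul_comm, smul_smul,
            ← mul_assoc (R ^ (n + 1)) R S, ← pow_succ, ← pow_succ]
  have hpow : ∀ k : ℕ, R ^ (k + 1) ∈ B := by
    intro k
    induction k with
    | zero => simpa using hmem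
    | succ k ih => rw [pow_succ]; exact mul_mem ih hmem
  have hpart : ∀ n : ℕ, (∑ k ∈ Finset.range (n + 1), c ^ k • R ^ (k + 1)) ∈ B := fun n =>
    sum_mem fun k _ => SMulMemClass.smul_mem _ (hpow k)
  -- the geometric ratio
  have hr0 : (0:ℝ) ≤ ‖c‖ * ‖R‖ := by positivity
  have hr1 : ‖c‖ * ‖R‖ < 1 := by
    have hcn : ‖c‖ = |μ - ν| := by
      rw [hc, norm_mul, Complex.norm_I, mul_one, ← Complex.ofReal_sub, Complex.norm_real,
        Real.norm_eq_abs]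
    have hRn : ‖R‖ ≤ |μ|⁻¹ := norm_rsl_le hb hμ
    calc ‖c‖ * ‖R‖ ≤ |μ - ν| * |μ|⁻¹ := by rw [hcn]; gcongr
      _ < |μ| * |μ|⁻¹ := mul_lt_mul_of_pos_right hd (inv_pos.mpr (abs_pos.mpr hμ))
      _ = 1 := mul_inv_cancel₀ (abs_ne_zero.mpr hμ)
  have habs : ∀ x y t : A, x = y + t → y - x = -t := fun x y t h => by rw [h]; abel
  have htend : Filter.Tendsto (fun n => ∑ k ∈ Finset.range (n + 1), c ^ k • R ^ (k + 1))
      Filter.atTop (nhds S) := by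
    rw [tendsto_iff_norm_sub_tendsto_zero]
    have hbound : ∀ n : ℕ,
        ‖(∑ k ∈ Finset.range (n + 1), c ^ k • R ^ (k + 1)) - S‖ ≤ (‖c‖ * ‖R‖) ^ (n + 1) * ‖S‖ := by
      intro n
      rw [habs _ _ _ (key_n n), norm_neg]
      calc ‖c ^ (n + 1) • (R ^ (n + 1) * S)‖ = ‖c‖ ^ (n + 1) * ‖R ^ (n + 1) * S‖ := by
            rw [norm_smul, norm_pow]
        _ ≤ ‖c‖ ^ (n + 1) * (‖R‖ ^ (n + 1) * ‖S‖) := by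
            gcongr
            exact (norm_mul_le _ _).trans (by gcongr; exact norm_pow_le' R (Nat.succ_pos n))
        _ = (‖c‖ * ‖R‖) ^ (n + 1) * ‖S‖ := by rw [mul_pow]; ring
    apply squeeze_zero (fun n => norm_nonneg _) hbound
    have : Filter.Tendsto (fun n : ℕ => (‖c‖ * ‖R‖) ^ (n + 1)) Filter.atTop (nhds 0) :=
      (tendsto_pow_atTop_nhds_zero_of_lt_one hr0 hr1).comp (Filter.tendsto_add_atTop_nat 1)
    simpa using this.mul_const ‖S‖
  exact hB.mem_of_tendsto htend (Filter.Eventually.of_forall hpart)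

end RslAux

namespace RslAux
variable {A : Type*} [CStarAlgebra A]

lemma rsl_neg {b : A} (hb : IsSelfAdjoint b) (μ : ℝ) : rsl (-μ) b = star (rsl μ b) := by
  rw [rsl, rsl, ← Ring.inverse_star]
  congr 1
  rw [star_sub, star_smul, star_one, hb.star_eq]
  congr 1
  simp [Complex.ext_iff]

lemma chain_pos {b : A} (hb : IsSelfAdjoint b) (B : NonUnitalStarSubalgebra ℂ A)
    (hB : IsClosed (B : Set A)) {μ₀ : ℝ} (h0 : 0 < μ₀) (hmem : rsl μ₀ b ∈ B) :
    ∀ μ : ℝ, 0 < μ → rsl μ b ∈ B := by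
  have up : ∀ n : ℕ, rsl ((3/2) ^ n * μ₀) b ∈ B := by
    intro n
    induction n with
    | zero => simpa using hmem
    | succ n ih =>
      have hp : 0 < (3/2 : ℝ) ^ n * μ₀ := by positivity
      refine step hb B hB (ne_of_gt hp) (by positivity) ?_ ih
      have e : ((3/2 : ℝ) ^ n * μ₀) - ((3/2) ^ (n + 1) * μ₀) = -((1/2) * ((3/2) ^ n * μ₀)) := by
        ring
      rw [e, abs_neg, abs_of_pos (by positivity), abs_of_pos hp]
      linarith
  intro μ hμp
  obtain ⟨n, hn⟩ := pow_unbounded_of_one_lt (μ / μ₀) (by norm_num : (1:ℝ) < 3/2)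
  have hlt : μ < (3/2) ^ n * μ₀ := by
    rw [div_lt_iff₀ h0] at hn
    linarith
  have hp : 0 < (3/2 : ℝ) ^ n * μ₀ := by positivity
  refine step hb B hB (ne_of_gt hp) (ne_of_gt hμp) ?_ (up n)
  rw [abs_of_pos (by linarith : (0:ℝ) < (3/2) ^ n * μ₀ - μ), abs_of_pos hp]
  linarith

end RslAux

/-- If `b` is a self-adjoint element of a unital complex C*-algebra `A`, `B` is a closed
(not necessarily unital) star-subalgebra of `A`, and the resolvent `R(μ₀, b)` belongs to `B`
for a single `μ₀ ∈ ℝ \ {0}`, then `R(μ, b) ∈ B` for every `μ ∈ ℝ \ {0}`. -/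
theorem resolvent_mem_of_mem_single {A : Type*} [CStarAlgebra A] (b : A)
    (hb : IsSelfAdjoint b) (B : NonUnitalStarSubalgebra ℂ A) (hB : IsClosed (B : Set A))
    (μ₀ : ℝ) (hμ₀ : μ₀ ≠ 0) (hmem : rsl μ₀ b ∈ B) :
    ∀ μ : ℝ, μ ≠ 0 → rsl μ b ∈ B := by
  have hstar : ∀ ν : ℝ, rsl ν b ∈ B → rsl (-ν) b ∈ B := fun ν h => by
    rw [RslAux.rsl_neg hb]
    exact star_mem h
  have hbase : rsl |μ₀| b ∈ B := by
    rcases abs_cases μ₀ with ⟨h, _⟩ | ⟨h, _⟩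
    · rwa [h]
    · rw [h]; exact hstar _ hmem
  have hp := RslAux.chain_pos hb B hB (abs_pos.mpr hμ₀) hbase
  intro μ hμ
  rcases hμ.lt_or_gt with h | h
  · have := hstar _ (hp (-μ) (by linarith))
    rwa [neg_neg] at this
  · exact hp μ h
end

section
/- Let H be a complex Hilbert space, let B be a closed subalgebra of the algebra B(H) of bounded operators on H, let t > 0, and let f, g : [0, t] → B(H) be maps such that: (i) f is continuous in the operator norm and f(s) ∈ B for all s; (ii) s ↦ g(s)x is continuous for every x ∈ H and sup_{s ∈ [0,t]} ‖g(s)‖ ≤ C < ∞; (iii) for every subinterval [r, r'] ⊆ [0, t], the operator x ↦ ∫_r^{r'} g(s)x ds belongs to B. Then the map T : H → H defined by T x = ∫₀ᵗ f(s)(g(s)x) ds is a bounded linear operator and T ∈ B. -/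
open intervalIntegral Set

/-- Key induction step for the Dyson series: let `B` be a norm-closed subalgebra of `B(H)`,
`f` norm-continuous on `[0,t]` with values in `B`, `g` strongly continuous on `[0,t]` and
uniformly bounded there, such that all the strong-operator integrals `x ↦ ∫_r^{r'} g(s)x ds`
over subintervals of `[0,t]` belong to `B`. Then the strong-operator integral
`x ↦ ∫₀ᵗ f(s)(g(s)x) ds` is a bounded operator belonging to `B`. -/
theorem strong_integral_mem_closed_subalgebra {H : Type*} [NormedAddCommGroup H]
    [InnerProductSpace ℂ H] [CompleteSpace H]
    (B : NonUnitalSubalgebra ℂ (H →L[ℂ] H)) (hB : IsClosed (B : Set (H →L[ℂ] H)))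
    (t : ℝ) (ht : 0 < t) (f g : ℝ → H →L[ℂ] H) (C : ℝ)
    (hf_cont : ContinuousOn f (Icc 0 t))
    (hf_mem : ∀ s ∈ Icc (0 : ℝ) t, f s ∈ B)
    (hg_cont : ∀ x : H, ContinuousOn (fun s => g s x) (Icc 0 t))
    (hg_bdd : ∀ s ∈ Icc (0 : ℝ) t, ‖g s‖ ≤ C)
    (hg_int_mem : ∀ r r' : ℝ, 0 ≤ r → r ≤ r' → r' ≤ t →
        ∃ G : H →L[ℂ] H, (∀ x : H, G x = ∫ s in r..r', g s x) ∧ G ∈ B) :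
    ∃ T : H →L[ℂ] H, (∀ x : H, T x = ∫ s in (0 : ℝ)..t, f s (g s x)) ∧ T ∈ B := by
  have ht' : (0:ℝ) ≤ t := ht.le
  have hC0 : 0 ≤ C := le_trans (norm_nonneg _) (hg_bdd 0 ⟨le_refl _, ht'⟩)
  have hcont : ∀ x : H, ContinuousOn (fun s => f s (g s x)) (Icc 0 t) :=
    fun x => hf_cont.clm_apply (hg_cont x)
  have hint : ∀ (x : H) (r r' : ℝ), r ∈ Icc (0:ℝ) t → r' ∈ Icc (0:ℝ) t →
      IntervalIntegrable (fun s => f s (g s x)) MeasureTheory.volume r r' := by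
    intro x r r' hr hr'
    exact ((hcont x).mono (uIcc_subset_Icc hr hr')).intervalIntegrable
  have hgint : ∀ (x : H) (r r' : ℝ), r ∈ Icc (0:ℝ) t → r' ∈ Icc (0:ℝ) t →
      IntervalIntegrable (fun s => g s x) MeasureTheory.volume r r' := by
    intro x r r' hr hr'
    exact ((hg_cont x).mono (uIcc_subset_Icc hr hr')).intervalIntegrable
  obtain ⟨M, hM⟩ := isCompact_Icc.exists_bound_of_continuousOn hf_cont
  set M' : ℝ := max M 0 with hM'def
  have hM'0 : 0 ≤ M' := le_max_right _ _
  have hM' : ∀ s ∈ Icc (0:ℝ) t, ‖f s‖ ≤ M' := fun s hs => (hM s hs).trans (le_max_left _ _)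
  have hnorm_bound : ∀ (x : H) (s : ℝ), s ∈ Icc (0:ℝ) t →
      ‖f s (g s x)‖ ≤ M' * (C * ‖x‖) := by
    intro x s hs
    calc ‖f s (g s x)‖ ≤ ‖f s‖ * ‖g s x‖ := (f s).le_opNorm _
      _ ≤ M' * (C * ‖x‖) := by
          apply mul_le_mul (hM' s hs) ?_ (norm_nonneg _) hM'0
          calc ‖g s x‖ ≤ ‖g s‖ * ‖x‖ := (g s).le_opNorm _
            _ ≤ C * ‖x‖ := mul_le_mul_of_nonneg_right (hg_bdd s hs) (norm_nonneg _)
  have h0mem : (0:ℝ) ∈ Icc (0:ℝ) t := ⟨le_refl _, ht'⟩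
  have htmem : t ∈ Icc (0:ℝ) t := ⟨ht', le_refl _⟩
  set T₀ : H →ₗ[ℂ] H :=
    { toFun := fun x => ∫ s in (0:ℝ)..t, f s (g s x)
      map_add' := by
        intro x y
        simp only [map_add]
        exact intervalIntegral.integral_add (hint x _ _ h0mem htmem) (hint y _ _ h0mem htmem)
      map_smul' := by
        intro c x
        simp only [map_smul, RingHom.id_apply]
        exact intervalIntegral.integral_smul c _ } with hT₀
  have hTbound : ∀ x : H, ‖T₀ x‖ ≤ M' * C * t * ‖x‖ := by
    intro x
    have h1 : ‖∫ s in (0:ℝ)..t, f s (g s x)‖ ≤ M' * (C * ‖x‖) * |t - 0| := by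
      apply intervalIntegral.norm_integral_le_of_norm_le_const
      intro s hs
      rw [uIoc_of_le ht'] at hs
      exact hnorm_bound x s ⟨hs.1.le, hs.2⟩
    rw [sub_zero, abs_of_nonneg ht'] at h1
    calc ‖T₀ x‖ = ‖∫ s in (0:ℝ)..t, f s (g s x)‖ := rfl
      _ ≤ M' * (C * ‖x‖) * t := h1
      _ = M' * C * t * ‖x‖ := by ring
  set T : H →L[ℂ] H := T₀.mkContinuous (M' * C * t) hTbound with hT
  refine ⟨T, fun x => rfl, ?_⟩
  -- membership via closure
  have hmemcl : (T : H →L[ℂ] H) ∈ closure (B : Set (H →L[ℂ] H)) := by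
    rw [Metric.mem_closure_iff]
    intro ε hε
    have hu := isCompact_Icc.uniformContinuousOn_of_continuous hf_cont
    rw [Metric.uniformContinuousOn_iff] at hu
    set ε' : ℝ := ε / (2 * (C + 1) * t) with hε'def
    have hε'pos : 0 < ε' := by positivity
    obtain ⟨δ, hδpos, hδ⟩ := hu ε' hε'pos
    obtain ⟨n, hn⟩ := exists_nat_gt (t / δ)
    have hn0 : 0 < (n:ℝ) := (div_pos ht hδpos).trans hn
    have htn : t / n < δ := by
      rw [div_lt_iff₀ hn0]
      have := (div_lt_iff₀ hδpos).1 hn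
      linarith
    set a : ℕ → ℝ := fun j => min ((j:ℝ) * t / n) t with ha
    have ha0 : a 0 = 0 := by simp [ha, ht']
    have han : a n = t := by
      have : (n:ℝ) * t / n = t := by field_simp
      simp [ha, this]
    have hamem : ∀ j : ℕ, a j ∈ Icc (0:ℝ) t :=
      fun j => ⟨le_min (by positivity) ht', min_le_right _ _⟩
    have hamono : ∀ j : ℕ, a j ≤ a (j+1) := by
      intro j
      refine min_le_min ?_ le_rfl
      have h : (j:ℝ) ≤ ((j+1:ℕ):ℝ) := by push_cast; linarith
      gcongr
    have hdiff : ∀ j : ℕ, a (j+1) - a j ≤ t / n := by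
      intro j
      rcases le_total ((j:ℝ) * t / n) t with h | h
      · have h1 : a j = (j:ℝ) * t / n := min_eq_left h
        have h2 : a (j+1) ≤ ((j:ℕ)+1 : ℕ) * t / n := min_le_left _ _
        have h3 : (((j:ℕ)+1 : ℕ) : ℝ) * t / n - (j:ℝ) * t / n = t / n := by
          push_cast; field_simp; ring
        rw [h1]; push_cast at h2 h3 ⊢; linarith
      · have h1 : a j = t := min_eq_right h
        have h2 : a (j+1) ≤ t := min_le_right _ _
        have : (0:ℝ) ≤ t / n := by positivity
        linarith
    have key : ∀ j : ℕ, ∃ G : H →L[ℂ] H,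
        (∀ x : H, G x = ∫ s in a j..a (j+1), g s x) ∧ G ∈ B :=
      fun j => hg_int_mem (a j) (a (j+1)) (hamem j).1 (hamono j) (hamem (j+1)).2
    choose G hGx hGB using key
    set S : H →L[ℂ] H := ∑ j ∈ Finset.range n, (f (a (j+1))).comp (G j) with hS
    have hSB : S ∈ B :=
      sum_mem fun j _ => B.mul_mem (hf_mem _ (hamem (j+1))) (hGB j)
    refine ⟨S, hSB, ?_⟩
    rw [dist_eq_norm]
    have hmain : ‖T - S‖ ≤ ε' * C * t := by
      apply ContinuousLinearMap.opNorm_le_bound _ (by positivity)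
      intro x
      have hsplit := intervalIntegral.sum_integral_adjacent_intervals
        (a := a) (μ := MeasureTheory.volume) (f := fun s => f s (g s x)) (n := n)
        (fun k _ => hint x _ _ (hamem k) (hamem (k+1)))
      rw [ha0, han] at hsplit
      have hSx : S x = ∑ j ∈ Finset.range n,
          ∫ s in a j..a (j+1), f (a (j+1)) (g s x) := by
        rw [hS]
        simp only [ContinuousLinearMap.sum_apply, ContinuousLinearMap.comp_apply]
        refine Finset.sum_congr rfl fun j _ => ?_
        rw [hGx j x, (f (a (j+1))).intervalIntegral_comp_comm
          (hgint x _ _ (hamem j) (hamem (j+1)))]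
      have hTx : (T - S) x = ∑ j ∈ Finset.range n,
          ∫ s in a j..a (j+1), (f s (g s x) - f (a (j+1)) (g s x)) := by
        rw [ContinuousLinearMap.sub_apply]
        have : T x = ∑ j ∈ Finset.range n, ∫ s in a j..a (j+1), f s (g s x) := hsplit.symm
        rw [this, hSx, ← Finset.sum_sub_distrib]
        refine Finset.sum_congr rfl fun j _ => ?_
        have h2 : IntervalIntegrable (fun s => f (a (j+1)) (g s x)) MeasureTheory.volume
            (a j) (a (j+1)) :=
          ((f (a (j+1))).continuous.comp_continuousOn
            ((hg_cont x).mono (uIcc_subset_Icc (hamem j) (hamem (j+1))))).intervalIntegrable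
        exact (intervalIntegral.integral_sub (hint x _ _ (hamem j) (hamem (j+1))) h2).symm
      rw [hTx]
      have hterm : ∀ j ∈ Finset.range n,
          ‖∫ s in a j..a (j+1), (f s (g s x) - f (a (j+1)) (g s x))‖ ≤
            ε' * (C * ‖x‖) * (a (j+1) - a j) := by
        intro j _
        have h1 : ‖∫ s in a j..a (j+1), (f s (g s x) - f (a (j+1)) (g s x))‖ ≤
            ε' * (C * ‖x‖) * |a (j+1) - a j| := by
          apply intervalIntegral.norm_integral_le_of_norm_le_const
          intro s hs
          rw [uIoc_of_le (hamono j)] at hs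
          have hsIcc : s ∈ Icc (0:ℝ) t :=
            ⟨(hamem j).1.trans hs.1.le, hs.2.trans (hamem (j+1)).2⟩
          have hdist : dist s (a (j+1)) < δ := by
            rw [Real.dist_eq, abs_of_nonpos (by linarith [hs.2])]
            have := hdiff j
            linarith [hs.1, htn]
          have hfdist : ‖f s - f (a (j+1))‖ < ε' := by
            have := hδ s hsIcc (a (j+1)) (hamem (j+1)) hdist
            rwa [dist_eq_norm] at this
          calc ‖f s (g s x) - f (a (j+1)) (g s x)‖
              = ‖(f s - f (a (j+1))) (g s x)‖ := by
                rw [ContinuousLinearMap.sub_apply]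
            _ ≤ ‖f s - f (a (j+1))‖ * ‖g s x‖ := (f s - f (a (j+1))).le_opNorm _
            _ ≤ ε' * (C * ‖x‖) := by
                apply mul_le_mul hfdist.le ?_ (norm_nonneg _) hε'pos.le
                calc ‖g s x‖ ≤ ‖g s‖ * ‖x‖ := (g s).le_opNorm _
                  _ ≤ C * ‖x‖ := mul_le_mul_of_nonneg_right (hg_bdd s hsIcc) (norm_nonneg _)
        rwa [abs_of_nonneg (sub_nonneg.2 (hamono j))] at h1
      calc ‖∑ j ∈ Finset.range n, ∫ s in a j..a (j+1), (f s (g s x) - f (a (j+1)) (g s x))‖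
          ≤ ∑ j ∈ Finset.range n, ‖∫ s in a j..a (j+1), (f s (g s x) - f (a (j+1)) (g s x))‖ :=
            norm_sum_le _ _
        _ ≤ ∑ j ∈ Finset.range n, ε' * (C * ‖x‖) * (a (j+1) - a j) :=
            Finset.sum_le_sum hterm
        _ = ε' * (C * ‖x‖) * (a n - a 0) := by
            rw [← Finset.mul_sum, Finset.sum_range_sub]
        _ = ε' * C * t * ‖x‖ := by rw [ha0, han]; ring
    have hfinal : ε' * C * t ≤ ε / 2 := by
      rw [hε'def, div_mul_eq_mul_div, div_mul_eq_mul_div, div_le_div_iff₀ (by positivity) two_pos]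
      nlinarith [mul_nonneg hε.le ht.le, mul_nonneg (mul_nonneg hε.le hC0) ht.le]
    linarith [hmain, hfinal]
  have h2 : (T : H →L[ℂ] H) ∈ (B : Set (H →L[ℂ] H)) := by
    rw [← hB.closure_eq]; exact hmemcl
  exact h2
end

section
/- Let A be a unital complex C*-algebra, let B ⊆ A be a norm-closed star-subalgebra, and let h₀, v ∈ A be self-adjoint with v ∈ B. Assume that exp(it h₀)·b·exp(−it h₀) ∈ B for all b ∈ B and all t ∈ ℝ. Then, with H := h₀ + v, one also has exp(it H)·b·exp(−it H) ∈ B for all b ∈ B and all t ∈ ℝ. -/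
open NormedSpace Filter

section Aux

variable {A : Type*} [NormedRing A] [NormedAlgebra ℂ A] [CompleteSpace A] [NormOneClass A]

private lemma aux_norm_pow_le_of_le {T : A} {M : ℝ} (h : ‖T‖ ≤ M) :
    ∀ n : ℕ, ‖T ^ n‖ ≤ M ^ n := by
  intro n
  induction n with
  | zero => simp
  | succ n ih =>
      rw [pow_succ, pow_succ]
      calc ‖T ^ n * T‖ ≤ ‖T ^ n‖ * ‖T‖ := norm_mul_le _ _
        _ ≤ M ^ n * M := by
            apply mul_le_mul ih h (norm_nonneg _)
            exact pow_nonneg (le_trans (norm_nonneg _) h) n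

private lemma aux_exp_tail_norm_le (x : A) (m : ℕ) :
    ‖exp x - ∑ k ∈ Finset.range m, ((k.factorial : ℂ))⁻¹ • x ^ k‖ ≤
      ‖x‖ ^ m * Real.exp ‖x‖ := by
  set f : ℕ → A := fun k => ((k.factorial : ℂ))⁻¹ • x ^ k with hf
  have h1 : HasSum f (exp x) := exp_series_hasSum_exp' x
  have h2 : HasSum (fun k => f (k + m)) (exp x - ∑ i ∈ Finset.range m, f i) :=
    (hasSum_nat_add_iff' m).mpr h1
  have hsum : Summable fun k => ‖f (k + m)‖ :=
    (summable_nat_add_iff m).mpr (norm_expSeries_summable' (𝕂 := ℂ) x)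
  have hsum2 : Summable fun k : ℕ => ‖x‖ ^ m * (‖x‖ ^ k / k.factorial) :=
    (Real.summable_pow_div_factorial ‖x‖).mul_left _
  have hbound : ∀ k : ℕ, ‖f (k + m)‖ ≤ ‖x‖ ^ m * (‖x‖ ^ k / k.factorial) := by
    intro k
    have hfac : ((k.factorial : ℝ))⁻¹ ≥ (((k + m).factorial : ℝ))⁻¹ := by
      apply inv_anti₀
      · exact_mod_cast Nat.factorial_pos k
      · exact_mod_cast Nat.factorial_le (Nat.le_add_right k m)
    have hxpow : ‖x ^ (k + m)‖ ≤ ‖x‖ ^ (k + m) := norm_pow_le x (k + m)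
    have : ‖f (k + m)‖ = (((k + m).factorial : ℝ))⁻¹ * ‖x ^ (k + m)‖ := by
      rw [hf]
      simp [norm_smul]
    rw [this]
    calc (((k + m).factorial : ℝ))⁻¹ * ‖x ^ (k + m)‖
        ≤ ((k.factorial : ℝ))⁻¹ * ‖x‖ ^ (k + m) := by
          apply mul_le_mul hfac hxpow (norm_nonneg _)
          positivity
      _ = ‖x‖ ^ m * (‖x‖ ^ k / k.factorial) := by
          rw [pow_add]; field_simp
  calc ‖exp x - ∑ k ∈ Finset.range m, f k‖
      = ‖∑' k, f (k + m)‖ := by rw [h2.tsum_eq]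
    _ ≤ ∑' k, ‖f (k + m)‖ := norm_tsum_le_tsum_norm hsum
    _ ≤ ∑' k : ℕ, ‖x‖ ^ m * (‖x‖ ^ k / k.factorial) := Summable.tsum_le_tsum hbound hsum hsum2
    _ = ‖x‖ ^ m * Real.exp ‖x‖ := by
        rw [tsum_mul_left]
        congr 1
        rw [Real.exp_eq_exp_ℝ]
        exact (expSeries_div_hasSum_exp ‖x‖).tsum_eq

private lemma aux_norm_exp_le (x : A) : ‖exp x‖ ≤ Real.exp ‖x‖ := by
  simpa using aux_exp_tail_norm_le x 0

private lemma aux_norm_exp_sub_one_le (x : A) : ‖exp x - 1‖ ≤ ‖x‖ * Real.exp ‖x‖ := by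
  have := aux_exp_tail_norm_le x 1
  simpa [Finset.sum_range_one] using this

private lemma aux_norm_exp_sub_one_sub_le (x : A) :
    ‖exp x - 1 - x‖ ≤ ‖x‖ ^ 2 * Real.exp ‖x‖ := by
  have := aux_exp_tail_norm_le x 2
  rw [Finset.sum_range_succ, Finset.sum_range_one] at this
  simp only [Nat.factorial_zero, Nat.factorial_one, Nat.cast_one, inv_one, one_smul, pow_zero,
    pow_one] at this
  simpa [sub_sub] using this

private lemma aux_norm_exp_add_sub (x y : A) :
    ‖exp (x + y) - exp x * exp y‖ ≤
      2 * (‖x‖ + ‖y‖) ^ 2 * Real.exp (‖x‖ + ‖y‖) := by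
  have key : exp (x + y) - exp x * exp y =
      (exp (x + y) - 1 - (x + y)) - (exp y - 1 - y) - x * (exp y - 1)
        - (exp x - 1 - x) * exp y := by noncomm_ring
  have ha : (0:ℝ) ≤ ‖x‖ := norm_nonneg x
  have hb : (0:ℝ) ≤ ‖y‖ := norm_nonneg y
  have h1 : ‖exp (x + y) - 1 - (x + y)‖ ≤ (‖x‖ + ‖y‖) ^ 2 * Real.exp (‖x‖ + ‖y‖) := by
    refine le_trans (aux_norm_exp_sub_one_sub_le (x + y)) ?_
    have hxy : ‖x + y‖ ≤ ‖x‖ + ‖y‖ := norm_add_le x y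
    gcongr
  have h2 : ‖exp y - 1 - y‖ ≤ ‖y‖ ^ 2 * Real.exp ‖y‖ := aux_norm_exp_sub_one_sub_le y
  have h3 : ‖x * (exp y - 1)‖ ≤ ‖x‖ * (‖y‖ * Real.exp ‖y‖) := by
    refine le_trans (norm_mul_le _ _) ?_
    exact mul_le_mul_of_nonneg_left (aux_norm_exp_sub_one_le y) ha
  have h4 : ‖(exp x - 1 - x) * exp y‖ ≤ ‖x‖ ^ 2 * Real.exp ‖x‖ * Real.exp ‖y‖ := by
    refine le_trans (norm_mul_le _ _) ?_
    exact mul_le_mul (aux_norm_exp_sub_one_sub_le x) (aux_norm_exp_le y) (norm_nonneg _)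
      (by positivity)
  have hea : (1:ℝ) ≤ Real.exp ‖x‖ := Real.one_le_exp ha
  have heb : (1:ℝ) ≤ Real.exp ‖y‖ := Real.one_le_exp hb
  have heab : Real.exp (‖x‖ + ‖y‖) = Real.exp ‖x‖ * Real.exp ‖y‖ := Real.exp_add _ _
  calc ‖exp (x + y) - exp x * exp y‖
      ≤ ‖exp (x + y) - 1 - (x + y)‖ + ‖exp y - 1 - y‖ + ‖x * (exp y - 1)‖
          + ‖(exp x - 1 - x) * exp y‖ := by
        rw [key]
        refine le_trans (norm_sub_le _ _) ?_
        refine add_le_add ?_ le_rfl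
        refine le_trans (norm_sub_le _ _) ?_
        exact add_le_add (norm_sub_le _ _) le_rfl
    _ ≤ 2 * (‖x‖ + ‖y‖) ^ 2 * Real.exp (‖x‖ + ‖y‖) := by
        rw [heab] at h1 ⊢
        have hE : (0:ℝ) < Real.exp ‖x‖ * Real.exp ‖y‖ :=
          mul_pos (Real.exp_pos _) (Real.exp_pos _)
        have hEB : Real.exp ‖y‖ ≤ Real.exp ‖x‖ * Real.exp ‖y‖ := by
          nlinarith [Real.exp_pos ‖y‖]
        have h2' : ‖y‖ ^ 2 * Real.exp ‖y‖ ≤ ‖y‖ ^ 2 * (Real.exp ‖x‖ * Real.exp ‖y‖) :=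
          mul_le_mul_of_nonneg_left hEB (by positivity)
        have h3' : ‖x‖ * (‖y‖ * Real.exp ‖y‖) ≤
            ‖x‖ * ‖y‖ * (Real.exp ‖x‖ * Real.exp ‖y‖) := by
          rw [mul_assoc]
          exact mul_le_mul_of_nonneg_left (mul_le_mul_of_nonneg_left hEB hb) ha
        nlinarith [h1, h2', h3', h4, mul_nonneg (mul_nonneg ha hb) hE.le]

private lemma aux_norm_pow_sub_pow_le (S T : A) {M : ℝ} (hM : 1 ≤ M)
    (hS : ‖S‖ ≤ M) (hT : ‖T‖ ≤ M) :
    ∀ n : ℕ, ‖S ^ n - T ^ n‖ ≤ n * M ^ n * ‖S - T‖ := by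
  intro n
  induction n with
  | zero => simp
  | succ n ih =>
      have key : S ^ (n + 1) - T ^ (n + 1) = S * (S ^ n - T ^ n) + (S - T) * T ^ n := by
        rw [pow_succ', pow_succ']; noncomm_ring
      have hTn : ‖T ^ n‖ ≤ M ^ n := aux_norm_pow_le_of_le hT n
      have hd : (0:ℝ) ≤ ‖S - T‖ := norm_nonneg _
      have hMn : (0:ℝ) ≤ M ^ n := pow_nonneg (le_trans zero_le_one hM) n
      have hMn' : M ^ n ≤ M ^ (n + 1) := by
        rw [pow_succ]
        nlinarith [hMn, hM]
      calc ‖S ^ (n + 1) - T ^ (n + 1)‖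
          ≤ ‖S * (S ^ n - T ^ n)‖ + ‖(S - T) * T ^ n‖ := by rw [key]; exact norm_add_le _ _
        _ ≤ M * (n * M ^ n * ‖S - T‖) + ‖S - T‖ * M ^ n := by
            gcongr
            · exact le_trans (norm_mul_le _ _) (mul_le_mul hS ih (norm_nonneg _)
                (le_trans zero_le_one hM))
            · exact le_trans (norm_mul_le _ _) (mul_le_mul_of_nonneg_left hTn hd)
        _ ≤ (↑(n + 1)) * M ^ (n + 1) * ‖S - T‖ := by
            push_cast
            rw [pow_succ]
            nlinarith [mul_nonneg hMn hd, hM, (Nat.cast_nonneg n : (0:ℝ) ≤ (n:ℝ)),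
              mul_nonneg (mul_nonneg (Nat.cast_nonneg n : (0:ℝ) ≤ (n:ℝ)) hMn) hd]

private lemma aux_trotter (x y : A) :
    Tendsto (fun n : ℕ => (exp ((n : ℂ)⁻¹ • x) * exp ((n : ℂ)⁻¹ • y)) ^ n) atTop
      (nhds (exp (x + y))) := by
  rw [tendsto_iff_norm_sub_tendsto_zero]
  set r : ℝ := ‖x‖ + ‖y‖ with hr
  have hr0 : 0 ≤ r := by positivity
  apply squeeze_zero' (Eventually.of_forall fun n => norm_nonneg _)
    (g := fun n : ℕ => 2 * r ^ 2 * Real.exp (2 * r) / (n : ℝ))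
  · filter_upwards [eventually_ge_atTop 1] with n hn
    have hN0 : (0:ℝ) < (n : ℝ) := by exact_mod_cast hn
    have hN1 : (1:ℝ) ≤ (n : ℝ) := by exact_mod_cast hn
    set ρ : ℝ := ((n : ℝ))⁻¹ * r with hρ
    have hρ0 : 0 ≤ ρ := by positivity
    have hρr : ρ ≤ r := by
      rw [hρ]
      calc ((n : ℝ))⁻¹ * r ≤ 1 * r := by
            apply mul_le_mul_of_nonneg_right _ hr0
            rw [inv_le_one_iff₀]; right; exact hN1
        _ = r := one_mul r
    have hnormc : ‖((n : ℂ))⁻¹‖ = ((n : ℝ))⁻¹ := by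
      rw [norm_inv, Complex.norm_natCast]
    set S : A := exp ((n : ℂ)⁻¹ • (x + y)) with hSdef
    set T : A := exp ((n : ℂ)⁻¹ • x) * exp ((n : ℂ)⁻¹ • y) with hTdef
    have hSn : S ^ n = exp (x + y) := by
      letI : NormedAlgebra ℚ A := NormedAlgebra.restrictScalars ℚ ℂ A
      rw [hSdef, ← exp_nsmul, ← Nat.cast_smul_eq_nsmul ℂ, smul_smul,
        mul_inv_cancel₀ (by exact_mod_cast hN0.ne'), one_smul]
    have hS : ‖S‖ ≤ Real.exp ρ := by
      refine le_trans (aux_norm_exp_le _) (Real.exp_le_exp.mpr ?_)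
      rw [norm_smul, hnormc, hρ]
      exact mul_le_mul_of_nonneg_left (norm_add_le x y) (by positivity)
    have hT : ‖T‖ ≤ Real.exp ρ := by
      refine le_trans (norm_mul_le _ _) ?_
      calc ‖exp ((n : ℂ)⁻¹ • x)‖ * ‖exp ((n : ℂ)⁻¹ • y)‖
          ≤ Real.exp (((n:ℝ))⁻¹ * ‖x‖) * Real.exp (((n:ℝ))⁻¹ * ‖y‖) := by
            apply mul_le_mul _ _ (norm_nonneg _) (Real.exp_nonneg _)
            · refine le_trans (aux_norm_exp_le _) (Real.exp_le_exp.mpr ?_)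
              rw [norm_smul, hnormc]
            · refine le_trans (aux_norm_exp_le _) (Real.exp_le_exp.mpr ?_)
              rw [norm_smul, hnormc]
        _ = Real.exp ρ := by rw [← Real.exp_add, hρ, hr]; ring_nf
    have hST : ‖S - T‖ ≤ 2 * ρ ^ 2 * Real.exp ρ := by
      have hxy : (n : ℂ)⁻¹ • (x + y) = (n : ℂ)⁻¹ • x + (n : ℂ)⁻¹ • y := smul_add _ _ _
      have := aux_norm_exp_add_sub ((n : ℂ)⁻¹ • x) ((n : ℂ)⁻¹ • y)
      rw [norm_smul, norm_smul, hnormc] at this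
      have heq : ((n:ℝ))⁻¹ * ‖x‖ + ((n:ℝ))⁻¹ * ‖y‖ = ρ := by rw [hρ, hr]; ring
      rw [heq] at this
      rw [hSdef, hxy]
      exact this
    have h1M : (1:ℝ) ≤ Real.exp ρ := Real.one_le_exp hρ0
    have hMn : (Real.exp ρ) ^ n = Real.exp r := by
      rw [← Real.exp_nat_mul, hρ]
      congr 1
      field_simp
    calc ‖(exp ((n : ℂ)⁻¹ • x) * exp ((n : ℂ)⁻¹ • y)) ^ n - exp (x + y)‖
        = ‖T ^ n - S ^ n‖ := by rw [hSn]
      _ ≤ n * (Real.exp ρ) ^ n * ‖T - S‖ := aux_norm_pow_sub_pow_le T S h1M hT hS n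
      _ ≤ n * Real.exp r * (2 * ρ ^ 2 * Real.exp ρ) := by
          rw [hMn, norm_sub_rev]
          have := mul_le_mul_of_nonneg_left hST
            (mul_nonneg (Nat.cast_nonneg n) (Real.exp_nonneg r))
          linarith
      _ ≤ n * Real.exp r * (2 * ρ ^ 2 * Real.exp r) := by
          gcongr
      _ = 2 * r ^ 2 * (Real.exp r * Real.exp r) / (n : ℝ) := by
          rw [hρ]
          field_simp
      _ = 2 * r ^ 2 * Real.exp (2 * r) / (n : ℝ) := by
          rw [two_mul r, Real.exp_add r r]
  · exact tendsto_const_div_atTop_nhds_zero_nat _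

end Aux

section Mem

variable {A : Type*} [CStarAlgebra A]

private lemma aux_pow_mem (B : NonUnitalStarSubalgebra ℂ A) {x : A} (hx : x ∈ B) :
    ∀ k : ℕ, x ^ (k + 1) ∈ B := by
  intro k
  induction k with
  | zero => simpa using hx
  | succ k ih => rw [pow_succ]; exact B.mul_mem ih hx

private lemma aux_exp_sub_one_mem (B : NonUnitalStarSubalgebra ℂ A)
    (hB : IsClosed (B : Set A)) {x : A} (hx : x ∈ B) : exp x - 1 ∈ B := by
  set f : ℕ → A := fun k => ((k.factorial : ℂ))⁻¹ • x ^ k with hf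
  have h1 : HasSum f (exp x) := exp_series_hasSum_exp' x
  have h2 : HasSum (fun k => f (k + 1)) (exp x - 1) := by
    have := (hasSum_nat_add_iff' 1).mpr h1
    simpa [hf, Finset.sum_range_one] using this
  refine hB.mem_of_tendsto h2.tendsto_sum_nat (Eventually.of_forall fun m => ?_)
  apply sum_mem
  intro k _
  exact SMulMemClass.smul_mem _ (aux_pow_mem B hx k)

private lemma aux_conj_exp_mem (B : NonUnitalStarSubalgebra ℂ A)
    (hB : IsClosed (B : Set A)) {u c : A} (hu : u ∈ B) (hc : c ∈ B) :
    exp u * c * exp (-u) ∈ B := by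
  have hp : exp u - 1 ∈ B := aux_exp_sub_one_mem B hB hu
  have hq : exp (-u) - 1 ∈ B := aux_exp_sub_one_mem B hB (neg_mem hu)
  have key : exp u * c * exp (-u) =
      c + (exp u - 1) * c + c * (exp (-u) - 1)
        + (exp u - 1) * (c * (exp (-u) - 1)) := by noncomm_ring
  rw [key]
  exact add_mem (add_mem (add_mem hc (B.mul_mem hp hc)) (B.mul_mem hc hq))
    (B.mul_mem hp (B.mul_mem hc hq))

end Mem

/-- Stability of a kinematical algebra under perturbed dynamics: if a norm-closed
star-subalgebra `B` of a unital C*-algebra is stable under the free dynamics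
`b ↦ exp(it h₀)·b·exp(−it h₀)` and contains the self-adjoint interaction `v`, then `B` is
stable under the interacting dynamics `b ↦ exp(itH)·b·exp(−itH)` with `H = h₀ + v`. -/
theorem interacting_dynamics_stable {A : Type*} [CStarAlgebra A]
    (B : NonUnitalStarSubalgebra ℂ A) (hB : IsClosed (B : Set A))
    (h₀ v : A) (hh₀ : IsSelfAdjoint h₀) (hv : IsSelfAdjoint v) (hvB : v ∈ B)
    (hfree : ∀ b ∈ B, ∀ t : ℝ,
        exp (((t : ℂ) * Complex.I) • h₀) * b *
          exp ((-((t : ℂ) * Complex.I)) • h₀) ∈ B) :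
    ∀ b ∈ B, ∀ t : ℝ,
      exp (((t : ℂ) * Complex.I) • (h₀ + v)) * b *
        exp ((-((t : ℂ) * Complex.I)) • (h₀ + v)) ∈ B := by
  intro b hb t
  rcases subsingleton_or_nontrivial A with hA | hA
  · have : exp (((t : ℂ) * Complex.I) • (h₀ + v)) * b *
        exp ((-((t : ℂ) * Complex.I)) • (h₀ + v)) = 0 := Subsingleton.elim _ _
    rw [this]
    exact zero_mem B
  set a : A := ((t : ℂ) * Complex.I) • h₀ with ha
  set w : A := ((t : ℂ) * Complex.I) • v with hw
  have hwB : w ∈ B := SMulMemClass.smul_mem _ hvB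
  have he1 : ((t : ℂ) * Complex.I) • (h₀ + v) = a + w := smul_add _ _ _
  have he2 : (-((t : ℂ) * Complex.I)) • (h₀ + v) = -w + -a := by
    rw [neg_smul, he1, neg_add_rev]
  rw [he1, he2]
  have hF := aux_trotter a w
  have hG := aux_trotter (-w) (-a)
  refine hB.mem_of_tendsto ((hF.mul (tendsto_const_nhds (x := b))).mul hG)
    (Eventually.of_forall fun n => ?_)
  show (exp ((n : ℂ)⁻¹ • a) * exp ((n : ℂ)⁻¹ • w)) ^ n * b *
      (exp ((n : ℂ)⁻¹ • -w) * exp ((n : ℂ)⁻¹ • -a)) ^ n ∈ B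
  set P : A := exp ((n : ℂ)⁻¹ • a) * exp ((n : ℂ)⁻¹ • w) with hP
  set Q : A := exp ((n : ℂ)⁻¹ • -w) * exp ((n : ℂ)⁻¹ • -a) with hQ
  -- the single conjugation step preserves B
  have hstep : ∀ d ∈ B, P * d * Q ∈ B := by
    intro d hd
    have hinner : exp ((n : ℂ)⁻¹ • w) * d * exp ((n : ℂ)⁻¹ • -w) ∈ B := by
      have : (n : ℂ)⁻¹ • -w = -((n : ℂ)⁻¹ • w) := smul_neg _ _
      rw [this]
      exact aux_conj_exp_mem B hB (SMulMemClass.smul_mem _ hwB) hd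
    have houter : ∀ e ∈ B, exp ((n : ℂ)⁻¹ • a) * e * exp ((n : ℂ)⁻¹ • -a) ∈ B := by
      intro e hehB
      have h1 : (n : ℂ)⁻¹ • a = (((t / n : ℝ) : ℂ) * Complex.I) • h₀ := by
        rw [ha, smul_smul]
        congr 1
        push_cast
        by_cases hn : (n : ℂ) = 0
        · simp [hn]
        · field_simp
      have h2 : (n : ℂ)⁻¹ • -a = (-(((t / n : ℝ) : ℂ) * Complex.I)) • h₀ := by
        rw [smul_neg, h1, ← neg_smul]
      rw [h1, h2]
      exact hfree e hehB (t / n)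
    have key : P * d * Q = exp ((n : ℂ)⁻¹ • a) *
        (exp ((n : ℂ)⁻¹ • w) * d * exp ((n : ℂ)⁻¹ • -w)) * exp ((n : ℂ)⁻¹ • -a) := by
      rw [hP, hQ]
      noncomm_ring
    rw [key]
    exact houter _ hinner
  -- iterate
  have hiter : ∀ k : ℕ, ∀ c ∈ B, P ^ k * c * Q ^ k ∈ B := by
    intro k
    induction k with
    | zero => intro c hc; simpa using hc
    | succ k ih =>
        intro c hc
        have key : P ^ (k + 1) * c * Q ^ (k + 1) = P * (P ^ k * c * Q ^ k) * Q := by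
          rw [pow_succ' P, pow_succ Q]
          noncomm_ring
        rw [key]
        exact hstep _ (ih c hc)
  exact hiter n b hb
end
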